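/- arXiv:2602.10850 — 6 statements merged into one kernel-verified Lean document; each statement's English description precedes it below -/
import Mathlib

section
/- Let A be a K-algebra over a field K, let u, v ∈ A and q ∈ K with vu = q·uv, where q is a primitive n-th root of unity (n > 1). Then (u + v)^n = u^n + v^n. -/
/-- q-Pascal coefficients: `qcoeff q m k` is the Gaussian binomial `[m choose k]_q`. -/
def qcoeff {K : Type*} [Field K] (q : K) : ℕ → ℕ → K
  | 0, 0 => 1
  | 0, _+1 => 0
  | m+1, 0 => qcoeff q m 0
  | m+1, k+1 => qcoeff q m k + q^(k+1) * qcoeff q m (k+1)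

lemma qcoeff_zero {K : Type*} [Field K] (q : K) (m : ℕ) : qcoeff q m 0 = 1 := by
  induction m with
  | zero => rfl
  | succ m ih => simpa [qcoeff] using ih

lemma qcoeff_of_gt {K : Type*} [Field K] (q : K) {m k : ℕ} (h : m < k) :
    qcoeff q m k = 0 := by
  induction m generalizing k with
  | zero =>
    match k, h with
    | k+1, _ => rfl
  | succ m ih =>
    match k, h with
    | k+1, h =>
      have h1 : m < k := Nat.lt_of_succ_lt_succ h
      have h2 : m < k + 1 := Nat.lt_succ_of_lt h1
      simp [qcoeff, ih h1, ih h2]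

lemma qcoeff_diag {K : Type*} [Field K] (q : K) (m : ℕ) : qcoeff q m m = 1 := by
  induction m with
  | zero => rfl
  | succ m ih => simp [qcoeff, ih, qcoeff_of_gt q (Nat.lt_succ_self m)]

/-- Reversed Pascal identity for the q-Pascal coefficients. -/
lemma qcoeff_rev {K : Type*} [Field K] (q : K) : ∀ m k : ℕ, k ≤ m →
    qcoeff q (m+1) (k+1) = q^(m-k) * qcoeff q m k + qcoeff q m (k+1) := by
  intro m
  induction m with
  | zero =>
    intro k hk
    interval_cases k
    simp [qcoeff]
  | succ m ih =>
    intro k hk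
    match k with
    | 0 =>
      have e0 := ih 0 (Nat.zero_le m)
      rw [qcoeff_zero] at e0
      simp only [Nat.sub_zero] at e0
      have h1 : qcoeff q (m+1) 1 = qcoeff q m 0 + q^1 * qcoeff q m 1 := rfl
      rw [qcoeff_zero] at h1
      have hD : qcoeff q (m+1+1) 1 = qcoeff q (m+1) 0 + q^1 * qcoeff q (m+1) 1 := rfl
      rw [qcoeff_zero] at hD
      simp only [Nat.sub_zero, qcoeff_zero, mul_one]
      rw [hD]
      linear_combination q * e0 - h1
    | j+1 =>
      have hj : j ≤ m := Nat.lt_succ_iff.mp hk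
      rcases eq_or_lt_of_le hj with heq | hlt
      · subst heq
        have htop : qcoeff q (j+1) (j+2) = 0 := qcoeff_of_gt q (Nat.lt_succ_self _)
        have hD : qcoeff q (j+1+1) (j+1+1)
            = qcoeff q (j+1) (j+1) + q^(j+2) * qcoeff q (j+1) (j+2) := rfl
        rw [hD, htop, Nat.sub_self]
        ring
      · have hjm : j + 1 ≤ m := hlt
        have e1 := ih j hj
        have e2 := ih (j+1) hjm
        have hX : qcoeff q (m+1) (j+1)
            = qcoeff q m j + q^(j+1) * qcoeff q m (j+1) := rfl
        have hY : qcoeff q (m+1) (j+2)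
            = qcoeff q m (j+1) + q^(j+2) * qcoeff q m (j+2) := rfl
        have hD : qcoeff q (m+1+1) (j+1+1)
            = qcoeff q (m+1) (j+1) + q^(j+2) * qcoeff q (m+1) (j+2) := rfl
        have hpow : q^(j+2) * q^(m-(j+1)) = q^(m-j) * q^(j+1) := by
          rw [← pow_add, ← pow_add]; congr 1; omega
        have hsub : m + 1 - (j + 1) = m - j := by omega
        rw [hD, hsub]
        linear_combination e1 + q^(j+2) * e2 - q^(m-j) * hX - hY
          + qcoeff q m (j+1) * hpow

lemma qcomm_pow {K A : Type*} [Field K] [Ring A] [Algebra K A]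
    (u v : A) (q : K) (hcomm : v * u = q • (u * v)) (k : ℕ) :
    v * u ^ k = q ^ k • (u ^ k * v) := by
  induction k with
  | zero => simp
  | succ k ih =>
    rw [pow_succ, ← mul_assoc, ih, smul_mul_assoc, mul_assoc, hcomm,
        mul_smul_comm, smul_smul, ← pow_succ, ← mul_assoc]

/-- q-binomial expansion. -/
lemma qexpand {K A : Type*} [Field K] [Ring A] [Algebra K A]
    (u v : A) (q : K) (hcomm : v * u = q • (u * v)) (m : ℕ) :
    (u + v) ^ m = ∑ k ∈ Finset.range (m+1), qcoeff q m k • (u ^ k * v ^ (m - k)) := by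
  induction m with
  | zero => simp [qcoeff]
  | succ m ih =>
    have split : ∀ k ∈ Finset.range (m+1),
        (u + v) * (qcoeff q m k • (u ^ k * v ^ (m - k)))
          = qcoeff q m k • (u^(k+1) * v^(m-k))
            + (q^k * qcoeff q m k) • (u^k * v^(m+1-k)) := by
      intro k hk
      have hk' : k ≤ m := Nat.lt_succ_iff.mp (Finset.mem_range.mp hk)
      have key : v * (u ^ k * v ^ (m - k)) = q^k • (u^k * v^(m+1-k)) := by
        rw [← mul_assoc, qcomm_pow u v q hcomm k, smul_mul_assoc, mul_assoc, ← pow_succ',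
          show m - k + 1 = m + 1 - k from by omega]
      rw [add_mul, mul_smul_comm, mul_smul_comm, key, ← mul_assoc, ← pow_succ',
          smul_smul, mul_comm (qcoeff q m k) (q^k)]
    rw [pow_succ', ih, Finset.mul_sum, Finset.sum_congr rfl split,
        Finset.sum_add_distrib]
    -- Now handle the two pieces and compare with the target sum.
    rw [Finset.sum_range_succ' (fun k => qcoeff q (m+1) k • (u ^ k * v ^ (m + 1 - k))) (m+1)]
    have hT : ∀ i ∈ Finset.range (m+1),
        qcoeff q (m+1) (i+1) • (u ^ (i+1) * v ^ (m + 1 - (i+1)))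
          = qcoeff q m i • (u^(i+1) * v^(m-i))
            + (q^(i+1) * qcoeff q m (i+1)) • (u^(i+1) * v^(m-i)) := by
      intro i _
      have h1 : qcoeff q (m+1) (i+1) = qcoeff q m i + q^(i+1) * qcoeff q m (i+1) := rfl
      have h2 : m + 1 - (i+1) = m - i := by omega
      rw [h1, h2, add_smul]
    rw [Finset.sum_congr rfl hT, Finset.sum_add_distrib]
    -- second piece of LHS: peel bottom; second piece of RHS: note its top term vanishes
    rw [Finset.sum_range_succ'
        (fun k => (q^k * qcoeff q m k) • (u^k * v^(m+1-k))) m]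
    rw [Finset.sum_range_succ
        (fun i => (q^(i+1) * qcoeff q m (i+1)) • (u^(i+1) * v^(m-i))) m]
    have htop : (q^(m+1) * qcoeff q m (m+1)) • (u^(m+1) * v^(m-m)) = 0 := by
      rw [qcoeff_of_gt q (Nat.lt_succ_self m)]
      simp
    have hbot : (q^0 * qcoeff q m 0) • (u^0 * v^(m+1-0)) = qcoeff q (m+1) 0 • (u^0 * v^(m+1)) := by
      simp [qcoeff_zero]
    have hmid : ∀ i ∈ Finset.range m,
        (q^(i+1) * qcoeff q m (i+1)) • (u^(i+1) * v^(m+1-(i+1)))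
          = (q^(i+1) * qcoeff q m (i+1)) • (u^(i+1) * v^(m-i)) := by
      intro i _
      have : m + 1 - (i+1) = m - i := by omega
      rw [this]
    rw [htop, hbot, Finset.sum_congr rfl hmid]
    abel

/-- If `u, v` in a `K`-algebra satisfy `v u = q • (u v)` with `q` a primitive
`n`-th root of unity (`n > 1`), then `(u + v)^n = u^n + v^n`. -/
theorem add_pow_of_qcommute {K A : Type*} [Field K] [Ring A] [Algebra K A]
    (u v : A) (q : K) (n : ℕ) (hn : 1 < n) (hq : IsPrimitiveRoot q n)
    (hcomm : v * u = q • (u * v)) :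
    (u + v) ^ n = u ^ n + v ^ n := by
  obtain ⟨m, rfl⟩ : ∃ m, n = m + 1 := ⟨n - 1, by omega⟩
  have hvanish : ∀ j : ℕ, j + 1 < m + 1 → qcoeff q (m+1) (j+1) = 0 := by
    intro j hjn
    have hjm : j ≤ m := by omega
    have e1 := qcoeff_rev q m j hjm
    have hD : qcoeff q (m+1) (j+1) = qcoeff q m j + q^(j+1) * qcoeff q m (j+1) := rfl
    have hpow : q^(j+1) * q^(m-j) = q^(m+1) := by
      rw [← pow_add]; congr 1; omega
    have h1 : q^(m+1) = 1 := hq.pow_eq_one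
    have hne : q^(j+1) ≠ 1 := hq.pow_ne_one_of_pos_of_lt (Nat.succ_ne_zero j) (by omega)
    have key : (1 - q^(j+1)) * qcoeff q (m+1) (j+1) = 0 := by
      linear_combination hD - q^(j+1) * e1 - qcoeff q m j * hpow - qcoeff q m j * h1
    rcases mul_eq_zero.mp key with h | h
    · exact absurd (sub_eq_zero.mp h).symm hne
    · exact h
  rw [qexpand u v q hcomm (m+1), Finset.sum_range_succ,
      Finset.sum_range_succ' (fun k => qcoeff q (m+1) k • (u ^ k * v ^ (m + 1 - k))) m]
  have hmid : ∀ i ∈ Finset.range m,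
      qcoeff q (m+1) (i+1) • (u ^ (i+1) * v ^ (m + 1 - (i+1))) = 0 := by
    intro i hi
    rw [hvanish i (by simpa using Nat.succ_lt_succ (Finset.mem_range.mp hi)), zero_smul]
  rw [Finset.sum_congr rfl hmid, Finset.sum_const, smul_zero,
      qcoeff_diag, qcoeff_zero]
  simp
  abel
end

section
/- Under the same hypotheses as the previous commutation lemma, for all n ≥ 1: x z^n = z^n x + ([n]_q b − [n]_{q^{-1}} c^{-1}) z^{n−1}. -/
private lemma pow_comm_aux {K A : Type*} [Field K] [Ring A] [Algebra K A]
    (z a : A) (q : K) (h : z * a = q • (a * z)) (n : ℕ) :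
    z ^ n * a = q ^ n • (a * z ^ n) := by
  induction n with
  | zero => simp
  | succ n ih =>
    rw [pow_succ, mul_assoc, h, mul_smul_comm, ← mul_assoc, ih,
      smul_mul_assoc, smul_smul, ← pow_succ', mul_assoc, ← pow_succ]

/-- The q-integer `[k]_q = 1 + q + ⋯ + q^(k-1)`. -/
def qInt {K : Type*} [Field K] (q : K) (k : ℕ) : K :=
  ∑ i ∈ Finset.range k, q ^ i

/-- Dual commutation formula: under the same hypotheses as the `z x^n` lemma,
`x z^n = z^n x + ([n]_q b - [n]_{q⁻¹} c⁻¹) z^(n-1)` for all `n ≥ 1`. -/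
theorem x_mul_z_pow {K A : Type*} [Field K] [Ring A] [Algebra K A]
    (x z : A) (b c : Aˣ) (q : K) (hq : q ≠ 0)
    (hzx : z * x = x * z + (((c⁻¹ : Aˣ) : A) - (b : A)))
    (hxc : x * (c : A) = q⁻¹ • ((c : A) * x))
    (hzc : z * (c : A) = q • ((c : A) * z))
    (hxb : x * (b : A) = q⁻¹ • ((b : A) * x))
    (hzb : z * (b : A) = q • ((b : A) * z)) :
    ∀ n : ℕ, 1 ≤ n →
      x * z ^ n
        = z ^ n * x + (qInt q n • (b : A) - qInt q⁻¹ n • ((c⁻¹ : Aˣ) : A)) * z ^ (n - 1) := by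
  have hxz : x * z = z * x + ((b : A) - ((c⁻¹ : Aˣ) : A)) := by
    rw [hzx]; abel
  have hzc' : z * ((c⁻¹ : Aˣ) : A) = q⁻¹ • (((c⁻¹ : Aˣ) : A) * z) := by
    have h1 : ((c⁻¹ : Aˣ) : A) * (z * (c : A)) * ((c⁻¹ : Aˣ) : A)
        = ((c⁻¹ : Aˣ) : A) * (q • ((c : A) * z)) * ((c⁻¹ : Aˣ) : A) := by rw [hzc]
    have h2 : ((c⁻¹ : Aˣ) : A) * z = q • (z * ((c⁻¹ : Aˣ) : A)) := by
      calc ((c⁻¹ : Aˣ) : A) * z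
          = ((c⁻¹ : Aˣ) : A) * (z * (c : A)) * ((c⁻¹ : Aˣ) : A) := by
            rw [← mul_assoc, mul_assoc _ (c : A) _]
            simp
        _ = q • (z * ((c⁻¹ : Aˣ) : A)) := by
            rw [h1, mul_smul_comm, smul_mul_assoc]
            congr 1
            simp [← mul_assoc]
    rw [h2, smul_smul, inv_mul_cancel₀ hq, one_smul]
  intro n hn
  induction n with
  | zero => omega
  | succ n ih =>
    rcases Nat.eq_or_lt_of_le hn with h1 | h1
    · -- n + 1 = 1
      have : n = 0 := by omega
      subst this
      simp [qInt, hxz]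
    · have hn1 : 1 ≤ n := by omega
      have IH := ih hn1
      have hb := pow_comm_aux z (b : A) q hzb n
      have hc := pow_comm_aux z ((c⁻¹ : Aˣ) : A) q⁻¹ hzc' n
      have hzz : z ^ (n - 1) * z = z ^ n := by
        rw [← pow_succ]; congr 1; omega
      have hq1 : qInt q (n + 1) = qInt q n + q ^ n := by
        simp [qInt, Finset.sum_range_succ]
      have hq2 : qInt q⁻¹ (n + 1) = qInt q⁻¹ n + (q⁻¹) ^ n := by
        simp [qInt, Finset.sum_range_succ]
      rw [pow_succ, ← mul_assoc, IH, add_mul, mul_assoc _ (z^(n-1)) z, hzz,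
        mul_assoc, hxz, mul_add, ← mul_assoc, ← pow_succ, mul_sub, hb, hc,
        Nat.add_sub_cancel, hq1, hq2, add_smul, add_smul]
      rw [sub_mul, sub_mul, add_mul, add_mul, smul_mul_assoc, smul_mul_assoc,
        smul_mul_assoc, smul_mul_assoc]
      abel
end

section
/- Let A be a K-algebra with elements x, z and commuting units b, c such that zx = xz + (c^{-1} − b), zb = qbz, zc = q^{-1}cz, xb = q^{-1}bx, xc = qcx, where q ∈ Kˣ is a root of unity of order n > 1 (q^n = 1, q ≠ 1). Then x^n and z^n commute with both x and z: z x^n = x^n z and x z^n = z^n x. -/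
private lemma pow_smul_comm_aux {K A : Type*} [Field K] [Ring A] [Algebra K A]
    (y u : A) (s : K) (h : y * u = s • (u * y)) (k : ℕ) :
    y ^ k * u = s ^ k • (u * y ^ k) := by
  induction k with
  | zero => simp
  | succ k ih =>
    rw [pow_succ, mul_assoc, h, mul_smul_comm, ← mul_assoc, ih, smul_mul_assoc, smul_smul,
      mul_comm s, ← pow_succ, mul_assoc]

/-- If `q` is a root of unity of order `n > 1`, then in the algebra with
`z x = x z + (c⁻¹ - b)` and the `q`-commutation relations with the units `b, c`,
the elements `x^n` and `z^n` commute with both `x` and `z`. -/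
theorem x_pow_z_pow_central {K A : Type*} [Field K] [Ring A] [Algebra K A]
    (x z : A) (b c : Aˣ) (q : K) (n : ℕ) (hn : 1 < n)
    (hqn : q ^ n = 1) (hq1 : q ≠ 1)
    (hzx : z * x = x * z + (((c⁻¹ : Aˣ) : A) - (b : A)))
    (hxc : x * (c : A) = q⁻¹ • ((c : A) * x))
    (hzc : z * (c : A) = q • ((c : A) * z))
    (hxb : x * (b : A) = q⁻¹ • ((b : A) * x))
    (hzb : z * (b : A) = q • ((b : A) * z)) :
    z * x ^ n = x ^ n * z ∧ x * z ^ n = z ^ n * x := by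
  have hq0 : q ≠ 0 := by
    intro h
    rw [h, zero_pow (by omega)] at hqn
    exact zero_ne_one hqn
  have hqi1 : q⁻¹ ≠ 1 := fun h => hq1 (inv_eq_one.mp h)
  have hqin : (q⁻¹) ^ n = 1 := by rw [inv_pow, hqn, inv_one]
  have hS : ∑ i ∈ Finset.range n, q ^ i = 0 := by
    rw [geom_sum_eq hq1, hqn, sub_self, zero_div]
  have hT : ∑ i ∈ Finset.range n, (q⁻¹) ^ i = 0 := by
    rw [geom_sum_eq hqi1, hqin, sub_self, zero_div]
  -- derived commutation relations
  have hcx : (c : A) * x = q • (x * (c : A)) := by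
    rw [hxc, smul_smul, mul_inv_cancel₀ hq0, one_smul]
  have hcz : (c : A) * z = q⁻¹ • (z * (c : A)) := by
    rw [hzc, smul_smul, inv_mul_cancel₀ hq0, one_smul]
  have hxc' : x * ((c⁻¹ : Aˣ) : A) = q • (((c⁻¹ : Aˣ) : A) * x) := by
    calc x * ((c⁻¹ : Aˣ) : A)
        = ((c⁻¹ : Aˣ) : A) * ((c : A) * x) * ((c⁻¹ : Aˣ) : A) := by
          rw [Units.inv_mul_cancel_left]
      _ = ((c⁻¹ : Aˣ) : A) * (q • (x * (c : A))) * ((c⁻¹ : Aˣ) : A) := by rw [hcx]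
      _ = q • (((c⁻¹ : Aˣ) : A) * x) := by
          rw [mul_smul_comm, smul_mul_assoc, ← mul_assoc, Units.mul_inv_cancel_right]
  have hzc' : z * ((c⁻¹ : Aˣ) : A) = q⁻¹ • (((c⁻¹ : Aˣ) : A) * z) := by
    calc z * ((c⁻¹ : Aˣ) : A)
        = ((c⁻¹ : Aˣ) : A) * ((c : A) * z) * ((c⁻¹ : Aˣ) : A) := by
          rw [Units.inv_mul_cancel_left]
      _ = ((c⁻¹ : Aˣ) : A) * (q⁻¹ • (z * (c : A))) * ((c⁻¹ : Aˣ) : A) := by rw [hcz]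
      _ = q⁻¹ • (((c⁻¹ : Aˣ) : A) * z) := by
          rw [mul_smul_comm, smul_mul_assoc, ← mul_assoc, Units.mul_inv_cancel_right]
  have hxz : x * z = z * x + ((b : A) - ((c⁻¹ : Aˣ) : A)) := by
    rw [hzx]; abel
  -- power commutation with the units
  have hxck : ∀ k : ℕ, x ^ k * ((c⁻¹ : Aˣ) : A) = q ^ k • (((c⁻¹ : Aˣ) : A) * x ^ k) :=
    pow_smul_comm_aux x _ q hxc'
  have hxbk : ∀ k : ℕ, x ^ k * (b : A) = (q⁻¹) ^ k • ((b : A) * x ^ k) :=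
    pow_smul_comm_aux x _ q⁻¹ hxb
  have hzbk : ∀ k : ℕ, z ^ k * (b : A) = q ^ k • ((b : A) * z ^ k) :=
    pow_smul_comm_aux z _ q hzb
  have hzck : ∀ k : ℕ, z ^ k * ((c⁻¹ : Aˣ) : A) = (q⁻¹) ^ k • (((c⁻¹ : Aˣ) : A) * z ^ k) :=
    pow_smul_comm_aux z _ q⁻¹ hzc'
  -- main inductions
  have key1 : ∀ k : ℕ, z * x ^ (k + 1) = x ^ (k + 1) * z +
      ((∑ i ∈ Finset.range (k + 1), q ^ i) • ((c⁻¹ : Aˣ) : A)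
        - (∑ i ∈ Finset.range (k + 1), (q⁻¹) ^ i) • (b : A)) * x ^ k := by
    intro k
    induction k with
    | zero => simpa using hzx
    | succ k ih =>
      have e1 : ∑ i ∈ Finset.range (k + 1 + 1), q ^ i
          = (∑ i ∈ Finset.range (k + 1), q ^ i) + q ^ (k + 1) := Finset.sum_range_succ _ _
      have e2 : ∑ i ∈ Finset.range (k + 1 + 1), (q⁻¹) ^ i
          = (∑ i ∈ Finset.range (k + 1), (q⁻¹) ^ i) + (q⁻¹) ^ (k + 1) :=
        Finset.sum_range_succ _ _
      calc z * x ^ (k + 1 + 1)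
          = (z * x ^ (k + 1)) * x := by rw [pow_succ, mul_assoc]
        _ = x ^ (k + 1) * (z * x) +
            ((∑ i ∈ Finset.range (k + 1), q ^ i) • ((c⁻¹ : Aˣ) : A)
              - (∑ i ∈ Finset.range (k + 1), (q⁻¹) ^ i) • (b : A)) * x ^ (k + 1) := by
            rw [ih, add_mul, mul_assoc, mul_assoc, ← pow_succ]
        _ = x ^ (k + 1 + 1) * z + (x ^ (k + 1) * ((c⁻¹ : Aˣ) : A) - x ^ (k + 1) * (b : A)) +
            ((∑ i ∈ Finset.range (k + 1), q ^ i) • ((c⁻¹ : Aˣ) : A)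
              - (∑ i ∈ Finset.range (k + 1), (q⁻¹) ^ i) • (b : A)) * x ^ (k + 1) := by
            rw [hzx, mul_add, ← mul_assoc, ← pow_succ, mul_sub]
        _ = _ := by
            rw [hxck (k + 1), hxbk (k + 1), e1, e2]
            simp only [add_smul, sub_mul, add_mul, smul_mul_assoc]
            abel
  have key2 : ∀ k : ℕ, x * z ^ (k + 1) = z ^ (k + 1) * x +
      ((∑ i ∈ Finset.range (k + 1), q ^ i) • (b : A)
        - (∑ i ∈ Finset.range (k + 1), (q⁻¹) ^ i) • ((c⁻¹ : Aˣ) : A)) * z ^ k := by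
    intro k
    induction k with
    | zero => simpa using hxz
    | succ k ih =>
      have e1 : ∑ i ∈ Finset.range (k + 1 + 1), q ^ i
          = (∑ i ∈ Finset.range (k + 1), q ^ i) + q ^ (k + 1) := Finset.sum_range_succ _ _
      have e2 : ∑ i ∈ Finset.range (k + 1 + 1), (q⁻¹) ^ i
          = (∑ i ∈ Finset.range (k + 1), (q⁻¹) ^ i) + (q⁻¹) ^ (k + 1) :=
        Finset.sum_range_succ _ _
      calc x * z ^ (k + 1 + 1)
          = (x * z ^ (k + 1)) * z := by rw [pow_succ, mul_assoc]
        _ = z ^ (k + 1) * (x * z) +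
            ((∑ i ∈ Finset.range (k + 1), q ^ i) • (b : A)
              - (∑ i ∈ Finset.range (k + 1), (q⁻¹) ^ i) • ((c⁻¹ : Aˣ) : A)) * z ^ (k + 1) := by
            rw [ih, add_mul, mul_assoc, mul_assoc, ← pow_succ]
        _ = z ^ (k + 1 + 1) * x + (z ^ (k + 1) * (b : A) - z ^ (k + 1) * ((c⁻¹ : Aˣ) : A)) +
            ((∑ i ∈ Finset.range (k + 1), q ^ i) • (b : A)
              - (∑ i ∈ Finset.range (k + 1), (q⁻¹) ^ i) • ((c⁻¹ : Aˣ) : A)) * z ^ (k + 1) := by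
            rw [hxz, mul_add, ← mul_assoc, ← pow_succ, mul_sub]
        _ = _ := by
            rw [hzbk (k + 1), hzck (k + 1), e1, e2]
            simp only [add_smul, sub_mul, add_mul, smul_mul_assoc]
            abel
  obtain ⟨m, rfl⟩ : ∃ m, n = m + 1 := ⟨n - 1, by omega⟩
  constructor
  · rw [key1 m, hS, hT, zero_smul, zero_smul, sub_zero, zero_mul, add_zero]
  · rw [key2 m, hS, hT, zero_smul, zero_smul, sub_zero, zero_mul, add_zero]
end

section
/- Let G be a group, R a K-algebra on which G acts, and suppose x ∈ R satisfies g·x·g^{-1} = χ(g)^{-1} x for a character χ: G → Kˣ in a skew group algebra R # G. Let V be a finite-dimensional simple module over R # G on which left multiplication by x is injective (x-torsion-free). If there is g ∈ G such that the left-multiplication operator of x on V has an eigenvector with nonzero eigenvalue λ, and dim V = n, then χ(g)^t = 1 for some 1 ≤ t ≤ n. In particular every element of the image of χ obtained this way is a root of unity. -/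
/-- If `T, S` are endomorphisms of an `n`-dimensional vector space over an
algebraically closed field, `S` invertible, `T ∘ S = μ • (S ∘ T)` with `μ ≠ 0`,
and `T` has an eigenvector with nonzero eigenvalue, then `μ^t = 1` for some
`1 ≤ t ≤ n`. In particular `μ` is a root of unity. -/
theorem scalar_is_root_of_unity {K V : Type*} [Field K] [IsAlgClosed K]
    [AddCommGroup V] [Module K V] [FiniteDimensional K V]
    (T S : V →ₗ[K] V) (hS : Function.Bijective S) (μ : K) (hμ : μ ≠ 0)
    (hTS : T ∘ₗ S = μ • (S ∘ₗ T))
    (lam : K) (hlam : lam ≠ 0) (v : V) (hv : v ≠ 0) (hTv : T v = lam • v)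
    (n : ℕ) (hdim : Module.finrank K V = n) :
    ∃ t : ℕ, 1 ≤ t ∧ t ≤ n ∧ μ ^ t = 1 := by
  by_contra hcon
  push_neg at hcon
  -- S^k v is an eigenvector with eigenvalue μ^k * lam
  have key : ∀ k : ℕ, T ((S ^ k) v) = (μ ^ k * lam) • ((S ^ k) v) := by
    intro k
    induction k with
    | zero => simpa using hTv
    | succ k ih =>
      have h1 : T (S ((S ^ k) v)) = μ • S (T ((S ^ k) v)) := by
        have := congrArg (fun f => f ((S ^ k) v)) hTS
        simpa using this
      have h2 : (S ^ (k + 1)) v = S ((S ^ k) v) := by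
        rw [pow_succ']; rfl
      rw [h2, h1, ih, map_smul, smul_smul, pow_succ']
      ring_nf
  have hSk : ∀ k : ℕ, (S ^ k) v ≠ 0 := by
    intro k
    have hinj : Function.Injective (S ^ k : V →ₗ[K] V) := by
      induction k with
      | zero => simp [Function.Injective]
      | succ k ih =>
        rw [pow_succ]
        intro a b hab
        simp only [Module.End.mul_apply] at hab
        exact hS.injective (ih hab)
    exact fun h => hv (hinj (by simpa using h))
  -- eigenvalues μ^i * lam for i = 0, ..., n are pairwise distinct
  have hμpow : ∀ i j : ℕ, i ≤ n → j ≤ n → μ ^ i = μ ^ j → i = j := by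
    intro i j hi hj hij
    rcases lt_trichotomy i j with h | h | h
    · exfalso
      have : μ ^ i * μ ^ (j - i) = μ ^ i * 1 := by
        rw [mul_one, ← pow_add, Nat.add_sub_cancel' h.le, hij]
      have := mul_left_cancel₀ (pow_ne_zero i hμ) this
      exact hcon (j - i) (by omega) (by omega) this
    · exact h
    · exfalso
      have : μ ^ j * μ ^ (i - j) = μ ^ j * 1 := by
        rw [mul_one, ← pow_add, Nat.add_sub_cancel' h.le, hij.symm]
      have := mul_left_cancel₀ (pow_ne_zero j hμ) this
      exact hcon (i - j) (by omega) (by omega) this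
  have hindep : LinearIndependent K (fun i : Fin (n + 1) => (S ^ (i : ℕ)) v) := by
    apply Module.End.eigenvectors_linearIndependent' T
      (fun i : Fin (n + 1) => μ ^ (i : ℕ) * lam)
    · intro i j hij
      have : μ ^ (i : ℕ) = μ ^ (j : ℕ) := mul_right_cancel₀ hlam hij
      exact Fin.ext (hμpow i j (by omega) (by omega) this)
    · intro i
      exact ⟨Module.End.mem_eigenspace_iff.mpr (key i), hSk i⟩
  have := hindep.fintype_card_le_finrank
  simp [hdim] at this
end

section
/- Let K be algebraically closed of characteristic 0, q a primitive n-th root of unity, and α, α' ∈ Kˣ, λ₀, λ₀' ∈ Kˣ. Let V, V' = K^n with operators X(v_i) = q^i α v_i, C(v_i)=v_{i+1} (indices mod n, with C(v_{n−1}) = λ₀ v₀), and analogously X', C' with α', λ₀'. Then there is a linear isomorphism f: V → V' with f∘X = X'∘f and f∘C = C'∘f if and only if λ₀ = λ₀' and α = q^i α' for some 0 ≤ i < n. -/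
section VxHelpers
variable {K : Type*} [Field K] {n : ℕ} [NeZero n]

omit [NeZero n] in
lemma Vx_evalDiag (L : (Fin n → K) →ₗ[K] (Fin n → K)) (d : Fin n → K)
    (h : ∀ i, L (Pi.single i 1) = d i • (Pi.single i 1 : Fin n → K)) (v : Fin n → K) (k : Fin n) :
    L v k = d k * v k := by
  have hv : v = ∑ i, v i • (Pi.single i 1 : Fin n → K) := by
    funext m; simp [Pi.single_apply]
  conv_lhs => rw [hv]
  rw [map_sum]
  simp only [map_smul, h]
  simp [Finset.sum_apply, Pi.single_apply, mul_comm]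

lemma Vx_evalShift (L : (Fin n → K) →ₗ[K] (Fin n → K)) (μ : Fin n → K)
    (h : ∀ i, L (Pi.single i 1) = μ i • (Pi.single (i+1) 1 : Fin n → K)) (v : Fin n → K)
    (k : Fin n) :
    L v k = μ (k-1) * v (k-1) := by
  have hv : v = ∑ i, v i • (Pi.single i 1 : Fin n → K) := by
    funext m; simp [Pi.single_apply]
  conv_lhs => rw [hv]
  rw [map_sum]
  simp only [map_smul, h]
  rw [Finset.sum_apply]
  rw [Finset.sum_eq_single (k-1)]
  · simp [Pi.single_apply, mul_comm]
  · intro i _ hi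
    have : k ≠ i + 1 := by
      intro hk; apply hi; rw [hk]; abel
    simp [Pi.single_apply, this]
  · simp

lemma Vx_detShift (L : (Fin n → K) →ₗ[K] (Fin n → K)) (μ : Fin n → K)
    (h : ∀ i, L (Pi.single i 1) = μ i • (Pi.single (i+1) 1 : Fin n → K)) :
    LinearMap.det L
      = ((Equiv.Perm.sign (Equiv.subRight (1 : Fin n) : Equiv.Perm (Fin n)) : ℤ) : K)
        * ∏ i, μ i := by
  rw [← LinearMap.det_toMatrix']
  have hM : LinearMap.toMatrix' L
      = Equiv.Perm.permMatrix K (Equiv.subRight (1 : Fin n)) * Matrix.diagonal μ := by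
    unfold Equiv.Perm.permMatrix
    rw [PEquiv.toMatrix_toPEquiv_mul]
    ext k i
    have hsingle : (fun j' => if j' = i then (1:K) else 0) = Pi.single i 1 := by
      funext j'; rw [Pi.single_apply]
    rw [LinearMap.toMatrix'_apply, h i]
    simp only [Pi.smul_apply, smul_eq_mul, Pi.single_apply, Matrix.submatrix_apply,
      Matrix.diagonal_apply, Equiv.subRight_apply, id]
    by_cases hk : k = i + 1
    · have : k - 1 = i := by rw [hk]; abel
      simp [hk, this]
    · have : k - 1 ≠ i := by
        intro hh; apply hk; rw [← hh]; abel
      simp [hk, this]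
  rw [hM, Matrix.det_mul, Matrix.det_permutation, Matrix.det_diagonal]

lemma Vx_prodMu (lam₀ : K) : (∏ i : Fin n, if (i : ℕ) + 1 = n then lam₀ else 1) = lam₀ := by
  have hn : 0 < n := Nat.pos_of_ne_zero (NeZero.ne n)
  have hcond : ∀ i : Fin n, ((i : ℕ) + 1 = n) = (i = ⟨n - 1, by omega⟩) := by
    intro i
    have := i.isLt
    simp only [Fin.ext_iff, eq_iff_iff]
    constructor <;> omega
  simp only [hcond]
  exact Fintype.prod_ite_eq' _ _

omit [NeZero n] in
lemma Vx_qpow (q : K) (hqn : q ^ n = 1) {a b : ℕ} (h : a % n = b % n) : q ^ a = q ^ b := by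
  have key : ∀ a : ℕ, q ^ a = q ^ (a % n) := by
    intro a
    conv_lhs => rw [← Nat.div_add_mod a n]
    rw [pow_add, pow_mul, hqn, one_pow, one_mul]
  rw [key a, key b, h]

lemma Vx_keyC (lam₀ : K) (i j : Fin n) :
    (if n ≤ ((j + 1 : Fin n) : ℕ) + (i : ℕ) then lam₀ else 1)
        * (if (j : ℕ) + 1 = n then lam₀ else 1)
      = (if ((j + i : Fin n) : ℕ) + 1 = n then lam₀ else 1)
        * (if n ≤ (j : ℕ) + (i : ℕ) then lam₀ else 1) := by
  have hn : 0 < n := Nat.pos_of_ne_zero (NeZero.ne n)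
  have hj := j.isLt
  have hi := i.isLt
  rcases Nat.lt_or_ge 1 n with h2 | h1
  · have hv1 : ((1 : Fin n) : ℕ) = 1 := by
      rw [Fin.val_one']; exact Nat.mod_eq_of_lt h2
    have e1 : ((j + 1 : Fin n) : ℕ) = if (j : ℕ) + 1 = n then 0 else (j : ℕ) + 1 := by
      rw [Fin.val_add, hv1]
      by_cases h : (j : ℕ) + 1 = n
      · rw [if_pos h, h, Nat.mod_self]
      · rw [if_neg h, Nat.mod_eq_of_lt (by omega)]
    have e2 : ((j + i : Fin n) : ℕ)
        = if (j : ℕ) + (i : ℕ) < n then (j : ℕ) + (i : ℕ) else (j : ℕ) + (i : ℕ) - n := by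
      rw [Fin.val_add]
      by_cases h : (j : ℕ) + (i : ℕ) < n
      · rw [if_pos h, Nat.mod_eq_of_lt h]
      · rw [if_neg h, Nat.mod_eq_sub_mod (by omega), Nat.mod_eq_of_lt (by omega)]
    rw [e1, e2]
    split_ifs <;> first | ring1 | (exfalso; omega)
  · have hn1 : n = 1 := by omega
    subst hn1
    have z1 : ((j + 1 : Fin 1) : ℕ) = 0 := by omega
    have z2 : ((j + i : Fin 1) : ℕ) = 0 := by omega
    have z3 : (j : ℕ) = 0 := by omega
    have z4 : (i : ℕ) = 0 := by omega
    rw [z1, z2, z3, z4]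
    simp

end VxHelpers


/-- Isomorphism criterion for the modules `V_x(α, λ)`: with `X e_i = q^i α e_i`,
`C e_i = e_{i+1}` (cyclically, with `C e_{n-1} = lam₀ e_0`), and similarly
`X', C'` for `α', lam₀'`, there is a linear isomorphism intertwining `(X, C)` with
`(X', C')` if and only if `lam₀ = lam₀'` and `α = q^i α'` for some `0 ≤ i < n`. -/
theorem Vx_iso_criterion {K : Type*} [Field K] [IsAlgClosed K] [CharZero K]
    (n : ℕ) [NeZero n] (q : K) (hq : IsPrimitiveRoot q n)
    (α α' lam₀ lam₀' : K) (hα : α ≠ 0) (hα' : α' ≠ 0)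
    (hlam₀ : lam₀ ≠ 0) (hlam₀' : lam₀' ≠ 0)
    (X C X' C' : (Fin n → K) →ₗ[K] (Fin n → K))
    (hX : ∀ i : Fin n, X (Pi.single i 1 : Fin n → K)
      = (q ^ (i : ℕ) * α) • (Pi.single i 1 : Fin n → K))
    (hC : ∀ i : Fin n, C (Pi.single i 1 : Fin n → K)
      = (if (i : ℕ) + 1 = n then lam₀ else 1) • (Pi.single (i + 1) 1 : Fin n → K))
    (hX' : ∀ i : Fin n, X' (Pi.single i 1 : Fin n → K)
      = (q ^ (i : ℕ) * α') • (Pi.single i 1 : Fin n → K))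
    (hC' : ∀ i : Fin n, C' (Pi.single i 1 : Fin n → K)
      = (if (i : ℕ) + 1 = n then lam₀' else 1) • (Pi.single (i + 1) 1 : Fin n → K)) :
    (∃ f : (Fin n → K) ≃ₗ[K] (Fin n → K),
        (∀ v, f (X v) = X' (f v)) ∧ (∀ v, f (C v) = C' (f v)))
      ↔ (lam₀ = lam₀' ∧ ∃ i : Fin n, α = q ^ (i : ℕ) * α') := by
  have hn : 0 < n := Nat.pos_of_ne_zero (NeZero.ne n)
  have hq1 : q ^ n = 1 := hq.pow_eq_one
  constructor
  · rintro ⟨f, hfX, hfC⟩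
    constructor
    · -- lam₀ = lam₀' via determinants
      have hcomp : ((f : (Fin n → K) →ₗ[K] (Fin n → K)) ∘ₗ C
          ∘ₗ (f.symm : (Fin n → K) →ₗ[K] (Fin n → K))) = C' := by
        apply LinearMap.ext; intro v
        simp only [LinearMap.comp_apply, LinearEquiv.coe_coe]
        rw [hfC, f.apply_symm_apply]
      have hdet : LinearMap.det C = LinearMap.det C' := by
        rw [← hcomp, LinearMap.det_conj]
      rw [Vx_detShift C _ hC, Vx_detShift C' _ hC', Vx_prodMu, Vx_prodMu] at hdet
      have hs : (((Equiv.Perm.sign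
          (Equiv.subRight (1:Fin n) : Equiv.Perm (Fin n))) : ℤ) : K) ≠ 0 := by
        rcases Int.units_eq_one_or (Equiv.Perm.sign
          (Equiv.subRight (1:Fin n) : Equiv.Perm (Fin n))) with h | h <;> rw [h] <;> norm_num
      exact mul_left_cancel₀ hs hdet
    · -- eigenvalue matching
      set v := f (Pi.single (0 : Fin n) 1) with hv
      have hvne : v ≠ 0 := by
        intro h0
        have h1 : (Pi.single (0 : Fin n) 1 : Fin n → K) = 0 := by
          apply f.injective; rw [map_zero]; exact h0
        have := congrFun h1 0
        simp at this
      obtain ⟨j, hj⟩ : ∃ j, v j ≠ 0 := by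
        by_contra h; push_neg at h; exact hvne (funext h)
      have hz : ((0 : Fin n) : ℕ) = 0 := rfl
      have hX0 : X (Pi.single (0:Fin n) 1) = α • (Pi.single (0:Fin n) 1 : Fin n → K) := by
        rw [hX 0, hz, pow_zero, one_mul]
      have h1 : X' v = α • v := by
        rw [hv, ← hfX, hX0, map_smul]
      have h2 := Vx_evalDiag X' (fun m => q ^ (m:ℕ) * α') hX' v j
      rw [h1] at h2
      simp only [Pi.smul_apply, smul_eq_mul] at h2
      exact ⟨j, mul_right_cancel₀ hj h2⟩
  · rintro ⟨hl, i, hi⟩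
    subst hl
    classical
    set c : Fin n → K := fun j => if n ≤ (j:ℕ) + (i:ℕ) then lam₀ else 1 with hcdef
    have hc : ∀ j, c j ≠ 0 := by
      intro j; simp only [hcdef]; split_ifs; exacts [hlam₀, one_ne_zero]
    let F : (Fin n → K) →ₗ[K] (Fin n → K) :=
      { toFun := fun v k => c (k - i) * v (k - i)
        map_add' := by intro u w; funext k; simp [mul_add]
        map_smul' := by intro a w; funext k; simp only [Pi.smul_apply, smul_eq_mul,
          RingHom.id_apply]; ring }
    let G : (Fin n → K) →ₗ[K] (Fin n → K) :=
      { toFun := fun v k => (c k)⁻¹ * v (k + i)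
        map_add' := by intro u w; funext k; simp [mul_add]
        map_smul' := by intro a w; funext k; simp only [Pi.smul_apply, smul_eq_mul,
          RingHom.id_apply]; ring }
    have hFG : F ∘ₗ G = LinearMap.id := by
      apply LinearMap.ext; intro v; funext k
      show c (k - i) * ((c (k - i))⁻¹ * v (k - i + i)) = v k
      rw [sub_add_cancel, ← mul_assoc, mul_inv_cancel₀ (hc _), one_mul]
    have hGF : G ∘ₗ F = LinearMap.id := by
      apply LinearMap.ext; intro v; funext k
      show (c k)⁻¹ * (c (k + i - i) * v (k + i - i)) = v k
      rw [add_sub_cancel_right, ← mul_assoc, inv_mul_cancel₀ (hc _), one_mul]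
    refine ⟨LinearEquiv.ofLinear F G hFG hGF, ?_, ?_⟩
    · intro v
      rw [LinearEquiv.ofLinear_apply, LinearEquiv.ofLinear_apply]
      funext k
      show c (k - i) * (X v) (k - i) = X' (F v) k
      rw [Vx_evalDiag X (fun m => q ^ (m:ℕ) * α) hX v (k - i),
        Vx_evalDiag X' (fun m => q ^ (m:ℕ) * α') hX' (F v) k]
      show c (k - i) * (q ^ ((k - i : Fin n):ℕ) * α * v (k - i))
        = q ^ (k:ℕ) * α' * (c (k - i) * v (k - i))
      have hm : (((k - i : Fin n):ℕ) + (i:ℕ)) % n = (k:ℕ) % n := by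
        rw [← Fin.val_add, sub_add_cancel]
        exact (Nat.mod_eq_of_lt k.isLt).symm
      have hqq : q ^ (((k - i : Fin n):ℕ) + (i:ℕ)) = q ^ (k:ℕ) := Vx_qpow q hq1 hm
      rw [hi, ← hqq, pow_add]
      ring
    · intro v
      rw [LinearEquiv.ofLinear_apply, LinearEquiv.ofLinear_apply]
      funext k
      show c (k - i) * (C v) (k - i) = C' (F v) k
      rw [Vx_evalShift C (fun m => if (m:ℕ) + 1 = n then lam₀ else 1) hC v (k - i),
        Vx_evalShift C' (fun m => if (m:ℕ) + 1 = n then lam₀ else 1) hC' (F v) k]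
      show c (k - i) * ((if ((k - i - 1 : Fin n):ℕ) + 1 = n then lam₀ else 1) * v (k - i - 1))
        = (if ((k - 1 : Fin n):ℕ) + 1 = n then lam₀ else 1)
          * (c (k - 1 - i) * v (k - 1 - i))
      have hsub : (k - i - 1 : Fin n) = k - 1 - i := by abel
      rw [hsub]
      have e1 : ((k - 1 - i : Fin n) + 1) = k - i := by abel
      have e2 : ((k - 1 - i : Fin n) + i) = k - 1 := by abel
      have key := Vx_keyC lam₀ i (k - 1 - i)
      rw [e1, e2] at key
      show c (k - i) * ((if ((k - 1 - i : Fin n):ℕ) + 1 = n then lam₀ else 1) * v (k - 1 - i))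
        = (if ((k - 1 : Fin n):ℕ) + 1 = n then lam₀ else 1)
          * (c (k - 1 - i) * v (k - 1 - i))
      simp only [hcdef]
      rw [← mul_assoc, key, mul_assoc]
end

section
/- Let K be algebraically closed of characteristic 0, n ≥ 1, and let V = ⊕_{i=0}^{n-1} K v_i with operators X, Y, and a family of commuting diagonal operators D_g (g in a group G) satisfying: X v_i = v_{i+1} for i < n−1, X v_{n−1} = λ v_0 with λ ≠ 0; D_g v_i = ρ_i(g) v_i where for each i ≠ j there is g with ρ_i(g) ≠ ρ_j(g). Then any subspace W ≤ V invariant under X and all D_g is 0 or V. -/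
/-- Simplicity of `V_x(ρ, λ, μ)` in the differential operator case: on
`V = K^n` let `X` be the cyclic shift with `X e_{n-1} = lam • e_0`, `lam ≠ 0`,
and let `(D g)` be a family of diagonal operators `D g (e_i) = ρ i g • e_i`
whose eigenvalues separate distinct indices. Then every subspace invariant
under `X` and all `D g` is `0` or `V`. -/
theorem Vx_diffop_simple {K : Type*} [Field K] [IsAlgClosed K] [CharZero K]
    (n : ℕ) [NeZero n] {G : Type*}
    (lam : K) (hlam : lam ≠ 0)
    (X : (Fin n → K) →ₗ[K] (Fin n → K)) (D : G → ((Fin n → K) →ₗ[K] (Fin n → K)))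
    (ρ : Fin n → G → K)
    (hX : ∀ i : Fin n, X (Pi.single i 1 : Fin n → K)
      = (if (i : ℕ) + 1 = n then lam else 1) • (Pi.single (i + 1) 1 : Fin n → K))
    (hD : ∀ (g : G) (i : Fin n),
      D g (Pi.single i 1 : Fin n → K) = ρ i g • (Pi.single i 1 : Fin n → K))
    (hsep : ∀ i j : Fin n, i ≠ j → ∃ g : G, ρ i g ≠ ρ j g)
    (W : Submodule K (Fin n → K))
    (hWX : ∀ w ∈ W, X w ∈ W) (hWD : ∀ (g : G), ∀ w ∈ W, D g w ∈ W) :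
    W = ⊥ ∨ W = ⊤ := by
  classical
  by_cases hbot : W = ⊥
  · exact Or.inl hbot
  right
  -- expansion of any vector in the standard basis
  have hexp : ∀ w : Fin n → K, w = ∑ i, w i • (Pi.single i 1 : Fin n → K) := by
    intro w; funext t
    simp [Finset.sum_apply, Pi.single_apply]
  -- action of D on an arbitrary vector
  have hDapp : ∀ (g : G) (w : Fin n → K) (j : Fin n), D g w j = ρ j g * w j := by
    intro g w j
    conv_lhs => rw [hexp w]
    rw [map_sum]
    simp_rw [map_smul, hD]
    simp [Finset.sum_apply, Pi.single_apply, mul_comm]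
  -- there is a basis vector in W
  have key : ∀ m : ℕ, ∀ w : Fin n → K, w ∈ W → w ≠ 0 →
      (Finset.univ.filter (fun j => w j ≠ 0)).card ≤ m →
      ∃ i : Fin n, (Pi.single i 1 : Fin n → K) ∈ W := by
    intro m
    induction m with
    | zero =>
      intro w hwW hw0 hcard
      exfalso
      apply hw0
      funext t
      by_contra ht
      simp only [Pi.zero_apply] at ht
      have : t ∈ Finset.univ.filter (fun j => w j ≠ 0) := by
        simp [ht]
      have := Finset.card_pos.mpr ⟨t, this⟩
      omega
    | succ m ih =>
      intro w hwW hw0 hcard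
      set S := Finset.univ.filter (fun j => w j ≠ 0) with hSdef
      have hSne : S.Nonempty := by
        by_contra h
        apply hw0
        funext t
        by_contra ht
        simp only [Pi.zero_apply] at ht
        exact h ⟨t, by simp [hSdef, ht]⟩
      obtain ⟨i, hiS⟩ := hSne
      have hwi : w i ≠ 0 := by simpa [hSdef] using hiS
      by_cases hS : ∃ j ∈ S, j ≠ i
      · obtain ⟨j, hjS, hji⟩ := hS
        have hwj : w j ≠ 0 := by simpa [hSdef] using hjS
        obtain ⟨g, hg⟩ := hsep i j (fun h => hji (h.symm))
        set w' : Fin n → K := D g w - ρ j g • w with hw'def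
        have hw'W : w' ∈ W := W.sub_mem (hWD g w hwW) (W.smul_mem _ hwW)
        have hw'app : ∀ k, w' k = (ρ k g - ρ j g) * w k := by
          intro k
          simp [hw'def, hDapp, sub_mul]
        have hw'0 : w' ≠ 0 := by
          intro h
          have : w' i = 0 := by rw [h]; rfl
          rw [hw'app] at this
          rcases mul_eq_zero.mp this with h1 | h1
          · exact hg (sub_eq_zero.mp h1)
          · exact hwi h1
        have hsub : Finset.univ.filter (fun k => w' k ≠ 0) ⊆ S.erase j := by
          intro k hk
          simp only [Finset.mem_filter, Finset.mem_univ, true_and] at hk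
          rw [Finset.mem_erase]
          constructor
          · intro h; subst h
            apply hk
            rw [hw'app]; ring
          · simp only [hSdef, Finset.mem_filter, Finset.mem_univ, true_and]
            intro h
            apply hk
            rw [hw'app, h, mul_zero]
        have hcard' : (Finset.univ.filter (fun k => w' k ≠ 0)).card ≤ m := by
          have h1 := Finset.card_le_card hsub
          have h2 : (S.erase j).card = S.card - 1 := Finset.card_erase_of_mem hjS
          have h3 : 1 ≤ S.card := Finset.card_pos.mpr ⟨j, hjS⟩
          omega
        exact ih w' hw'W hw'0 hcard'
      · push_neg at hS
        refine ⟨i, ?_⟩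
        obtain ⟨c, hc0, hw'⟩ : ∃ c : K, c ≠ 0 ∧ w = c • (Pi.single i 1 : Fin n → K) := by
          refine ⟨w i, hwi, ?_⟩
          funext t
          by_cases ht : t = i
          · subst ht; simp
          · have : w t = 0 := by
              by_contra h
              exact ht (hS t (by simp [hSdef, h]))
            simp [this, Pi.single_apply, Ne.symm ht]
        have hmem : c⁻¹ • w ∈ W := W.smul_mem _ hwW
        rwa [hw', smul_smul, inv_mul_cancel₀ hc0, one_smul] at hmem
  obtain ⟨w, hwW, hw0⟩ := Submodule.ne_bot_iff W |>.mp hbot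
  obtain ⟨i, hiW⟩ := key _ w hwW hw0 le_rfl
  -- the shift step
  have step : ∀ c : Fin n, (Pi.single c 1 : Fin n → K) ∈ W →
      (Pi.single (c + 1) 1 : Fin n → K) ∈ W := by
    intro c hc
    have hXc := hWX _ hc
    rw [hX] at hXc
    set a : K := if (c : ℕ) + 1 = n then lam else 1 with ha
    have ha0 : a ≠ 0 := by
      rw [ha]; split_ifs
      · exact hlam
      · exact one_ne_zero
    have : a⁻¹ • (a • (Pi.single (c + 1) 1 : Fin n → K)) ∈ W :=
      W.smul_mem _ hXc
    rwa [smul_smul, inv_mul_cancel₀ ha0, one_smul] at this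
  open Fin.NatCast in
  have hnat : ∀ m : ℕ, (Pi.single (i + (m : Fin n)) 1 : Fin n → K) ∈ W := by
    intro m
    induction m with
    | zero => simpa using hiW
    | succ m ih =>
      have : ((m + 1 : ℕ) : Fin n) = (m : Fin n) + 1 := by push_cast; ring
      rw [this, ← add_assoc]
      exact step _ ih
  open Fin.NatCast in
  have hall : ∀ j : Fin n, (Pi.single j 1 : Fin n → K) ∈ W := by
    intro j
    have := hnat (j - i).val
    rwa [Fin.cast_val_eq_self, add_sub_cancel] at this
  rw [eq_top_iff]
  intro v _
  rw [hexp v]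
  exact Submodule.sum_mem W (fun j _ => W.smul_mem _ (hall j))
end
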